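/- Let d ≥ 3 and θ > 0. Let 𝒬 be a family of cubes satisfying (G), and let ω : ℝ^d → ℝ be measurable with 0 < δ ≤ ω(x) ≤ 1 for all x and some δ > 0. Assume there exist C₀ > 0 and λ > 0 such that |ω(x) − ω(y)| ≤ C₀ (|x − y| / d_Q)^λ for every Q ∈ 𝒬 and all x, y ∈ Q**. Then there is a constant C > 0, depending only on d, θ, δ, λ, C₀ and the constant in (G), such that every (ω,𝒬)-atom a belongs to H¹_at(𝒜_𝒬) with ‖a‖_{H¹_at(𝒜_𝒬)} ≤ C. -/

import Mathlib

open MeasureTheory Filter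
open scoped ENNReal

noncomputable section

/-- `ℝ^d` as a Euclidean space. -/
abbrev Rd (d : ℕ) := EuclideanSpace ℝ (Fin d)

/-- A cube in `ℝ^d`, given by its center and (positive) radius. -/
structure Cube (d : ℕ) where
  center : Rd d
  radius : ℝ
  radius_pos : 0 < radius

/-- The underlying open set of a cube: `Q(c,r) = {y : max_i |c_i - y_i| < r}`. -/
def Cube.carrier {d : ℕ} (Q : Cube d) : Set (Rd d) :=
  {y | ∀ i, |Q.center i - y i| < Q.radius}

/-- The diameter `d_Q = 2 √d · r_Q` of a cube. -/
def Cube.diam {d : ℕ} (Q : Cube d) : ℝ := 2 * Real.sqrt d * Q.radius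

/-- The `k`-fold enlargement `Q^{*k} = Q(c_Q, (1+θ)^k r_Q)` of a cube, as a set. -/
def Cube.starSet {d : ℕ} (Q : Cube d) (θ : ℝ) (k : ℕ) : Set (Rd d) :=
  {y | ∀ i, |Q.center i - y i| < (1 + θ) ^ k * Q.radius}

/-- The condition (G) on a family of cubes: it is countable, the closures cover `ℝ^d`,
distinct cubes overlap in measure zero, and cubes whose fourfold enlargements meet have
comparable diameters (with constant `CG`). -/
def SatG {d : ℕ} (θ CG : ℝ) (𝒬 : Set (Cube d)) : Prop :=
  𝒬.Countable ∧
  (⋃ Q ∈ 𝒬, closure Q.carrier) = Set.univ ∧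
  (∀ Q₁ ∈ 𝒬, ∀ Q₂ ∈ 𝒬, Q₁ ≠ Q₂ → volume (Q₁.carrier ∩ Q₂.carrier) = 0) ∧
  (∀ Q₁ ∈ 𝒬, ∀ Q₂ ∈ 𝒬, (Q₁.starSet θ 4 ∩ Q₂.starSet θ 4).Nonempty →
    CG⁻¹ * Q₁.diam ≤ Q₂.diam ∧ Q₂.diam ≤ CG * Q₁.diam)

/-- An `(ω,𝒬)`-atom: either a function supported in a cube `K ⊆ Q^{**}` (`Q ∈ 𝒬`) with
`‖a‖_∞ ≤ |K|⁻¹` and `∫_K a ω = 0`, or `a = |Q|⁻¹ χ_Q` for some `Q ∈ 𝒬`.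
Taking `ω ≡ 1` gives the notion of a `𝒬`-atom. -/
def IsWAtom {d : ℕ} (θ : ℝ) (𝒬 : Set (Cube d)) (ω : Rd d → ℝ) (a : Rd d → ℝ) : Prop :=
  Integrable a ∧
  ((∃ Q ∈ 𝒬, ∃ K : Cube d, K.carrier ⊆ Q.starSet θ 2 ∧
      Function.support a ⊆ K.carrier ∧
      (∀ᵐ x ∂volume, |a x| ≤ ((volume K.carrier).toReal)⁻¹) ∧
      ∫ x in K.carrier, a x * ω x = 0) ∨
    (∃ Q ∈ 𝒬, a = (Q.carrier).indicator (fun _ => ((volume Q.carrier).toReal)⁻¹)))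

/-- `f = ∑ λ_j a_j` is an atomic decomposition: all `a_j` are atoms (i.e. satisfy `𝒜`),
`∑ |λ_j| < ∞`, and the partial sums converge to `f` in `L¹`. -/
def IsDecomp {d : ℕ} (𝒜 : (Rd d → ℝ) → Prop) (f : Rd d → ℝ)
    (lam : ℕ → ℝ) (a : ℕ → Rd d → ℝ) : Prop :=
  (∀ j, 𝒜 (a j)) ∧ Summable (fun j => |lam j|) ∧
  Tendsto (fun N => ∫ x, |f x - ∑ j ∈ Finset.range N, lam j * a j x|) atTop (nhds 0)

/-- Membership in the atomic Hardy space `H¹_at(𝒜)`. -/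
def MemH1at {d : ℕ} (𝒜 : (Rd d → ℝ) → Prop) (f : Rd d → ℝ) : Prop :=
  ∃ lam a, IsDecomp 𝒜 f lam a

/-- The atomic norm `‖f‖_{H¹_at(𝒜)} = inf ∑ |λ_j|` over all atomic decompositions. -/
def H1atNorm {d : ℕ} (𝒜 : (Rd d → ℝ) → Prop) (f : Rd d → ℝ) : ℝ :=
  sInf {s | ∃ lam a, IsDecomp 𝒜 f lam a ∧ s = ∑' j, |lam j|}

namespace S4
variable {d : ℕ}

lemma cube_carrier_eq_preimage (Q : Cube d) :
    Q.carrier = (MeasurableEquiv.toLp 2 (Fin d → ℝ)).symm ⁻¹'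
      (Set.univ.pi fun i => Set.Ioo (Q.center i - Q.radius) (Q.center i + Q.radius)) := by
  ext y
  simp only [Cube.carrier, Set.mem_setOf_eq, Set.mem_preimage, Set.mem_pi, Set.mem_univ,
    Set.mem_Ioo, forall_true_left, MeasurableEquiv.toLp_symm_apply]
  refine forall_congr' fun i => ?_
  rw [abs_sub_lt_iff]
  constructor <;> rintro ⟨h1, h2⟩ <;> constructor <;> linarith

lemma cube_measurableSet (Q : Cube d) : MeasurableSet Q.carrier := by
  rw [cube_carrier_eq_preimage]
  exact (MeasurableEquiv.toLp 2 (Fin d → ℝ)).symm.measurable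
    (MeasurableSet.univ_pi fun i => measurableSet_Ioo)

lemma cube_volume (Q : Cube d) :
    volume Q.carrier = ENNReal.ofReal ((2 * Q.radius) ^ d) := by
  rw [cube_carrier_eq_preimage,
    (EuclideanSpace.volume_preserving_symm_measurableEquiv_toLp (Fin d)).measure_preimage
      ((MeasurableSet.univ_pi fun i => measurableSet_Ioo).nullMeasurableSet)]
  rw [volume_pi_pi]
  have : ∀ x : Fin d, ENNReal.ofReal (Q.center x + Q.radius - (Q.center x - Q.radius))
      = ENNReal.ofReal (2 * Q.radius) := by intro x; congr 1; ring
  simp only [Real.volume_Ioo]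
  rw [Finset.prod_congr rfl (fun x _ => this x), Finset.prod_const, Finset.card_univ,
    Fintype.card_fin, ← ENNReal.ofReal_pow (by have := Q.radius_pos; positivity)]

lemma cube_volume_toReal (Q : Cube d) :
    (volume Q.carrier).toReal = (2 * Q.radius) ^ d := by
  rw [cube_volume, ENNReal.toReal_ofReal (by have := Q.radius_pos; positivity)]

lemma cube_volume_toReal_pos (Q : Cube d) : 0 < (volume Q.carrier).toReal := by
  rw [cube_volume_toReal]; have := Q.radius_pos; positivity

lemma cube_volume_lt_top (Q : Cube d) : volume Q.carrier < ⊤ := by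
  rw [cube_volume]; exact ENNReal.ofReal_lt_top

lemma cube_mem_center (Q : Cube d) : Q.center ∈ Q.carrier := by
  intro i; simpa using Q.radius_pos

lemma cube_subset {c c' : Rd d} {r r' : ℝ} (h : ∀ i, |c i - c' i| ≤ r - r') :
    {y : Rd d | ∀ i, |c' i - y i| < r'} ⊆ {y : Rd d | ∀ i, |c i - y i| < r} := by
  intro y hy i
  calc |c i - y i| ≤ |c i - c' i| + |c' i - y i| := abs_sub_le _ _ _
    _ < (r - r') + r' := by have := h i; have := hy i; linarith [add_lt_add_of_le_of_lt (h i) (hy i)]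
    _ = r := by ring

lemma norm_sub_le_of_mem {K : Cube d} {x y : Rd d} (hx : x ∈ K.carrier) (hy : y ∈ K.carrier) :
    ‖x - y‖ ≤ Real.sqrt d * (2 * K.radius) := by
  have hco : ∀ i, |x i - y i| ≤ 2 * K.radius := by
    intro i
    have h1 := hx i; have h2 := hy i
    have : |x i - y i| ≤ |K.center i - x i| + |K.center i - y i| := by
      rw [abs_sub_comm (K.center i) (x i)]
      calc |x i - y i| = |(x i - K.center i) + (K.center i - y i)| := by ring_nf
        _ ≤ _ := abs_add_le _ _
    linarith
  rw [EuclideanSpace.norm_eq]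
  have : (∑ i, ‖(x - y) i‖ ^ 2) ≤ (d : ℝ) * (2 * K.radius) ^ 2 := by
    calc (∑ i, ‖(x - y) i‖ ^ 2) ≤ ∑ _i : Fin d, (2 * K.radius) ^ 2 := by
          refine Finset.sum_le_sum fun i _ => ?_
          have : ‖(x - y) i‖ = |x i - y i| := by
            simp [PiLp.sub_apply, Real.norm_eq_abs]
          rw [this]
          exact pow_le_pow_left₀ (abs_nonneg _) (hco i) 2
      _ = (d : ℝ) * (2 * K.radius) ^ 2 := by
          rw [Finset.sum_const, Finset.card_univ, Fintype.card_fin, nsmul_eq_mul]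
  calc Real.sqrt (∑ i, ‖(x - y) i‖ ^ 2) ≤ Real.sqrt ((d : ℝ) * (2 * K.radius) ^ 2) :=
        Real.sqrt_le_sqrt this
    _ = Real.sqrt d * (2 * K.radius) := by
        rw [Real.sqrt_mul (Nat.cast_nonneg d), Real.sqrt_sq (by have := K.radius_pos; positivity)]

lemma coord_bound {K : Cube d} {c : Rd d} {s : ℝ}
    (h : K.carrier ⊆ {y : Rd d | ∀ i, |c i - y i| < s}) (i : Fin d) :
    |c i - K.center i| ≤ s - K.radius := by
  have hr := K.radius_pos
  refine le_of_forall_pos_le_add fun ε hε => ?_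
  set t : ℝ := max 0 (K.radius - ε) with ht
  have ht0 : 0 ≤ t := le_max_left _ _
  have htr : t < K.radius := by
    rw [ht, max_lt_iff]; exact ⟨hr, by linarith⟩
  have htK : K.radius - ε ≤ t := le_max_right _ _
  set D := c i - K.center i with hD
  set σ : ℝ := if 0 ≤ D then 1 else -1 with hσ
  have hσ1 : |σ| = 1 := by rw [hσ]; split <;> simp
  set y : Rd d := K.center - (t * σ) • EuclideanSpace.single i (1:ℝ) with hy
  have hyK : y ∈ K.carrier := by
    intro j
    have : K.center j - y j = (t * σ) * (EuclideanSpace.single i (1:ℝ) j) := by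
      rw [hy]; simp [PiLp.sub_apply, PiLp.smul_apply]
    rw [show |K.center j - y j| = |(t*σ) * (EuclideanSpace.single i (1:ℝ) j)| from by rw [this]]
    rcases eq_or_ne j i with rfl | hne
    · rw [EuclideanSpace.single_apply, if_pos rfl, mul_one, abs_mul, hσ1, mul_one,
        abs_of_nonneg ht0]
      exact htr
    · rw [EuclideanSpace.single_apply, if_neg hne, mul_zero, abs_zero]
      exact hr
  have hlt := h hyK i
  have hyi : c i - y i = D + t * σ := by
    rw [hy]; simp [PiLp.sub_apply, PiLp.smul_apply, EuclideanSpace.single_apply, hD]; ring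
  rw [hyi] at hlt
  have habs : |D + t * σ| = |D| + t := by
    rw [hσ]
    split_ifs with hD0
    · rw [mul_one, abs_of_nonneg (by linarith), abs_of_nonneg hD0]
    · push_neg at hD0
      rw [abs_of_neg hD0]
      have : D + t * (-1) = -( -D + t) := by ring
      rw [this, abs_neg, abs_of_nonneg (by linarith)]
  rw [habs] at hlt
  linarith

lemma integral_indicator_one {K : Cube d} {S : Set (Rd d)} (hS : MeasurableSet S)
    (h : K.carrier ⊆ S) :
    ∫ x in S, K.carrier.indicator (fun _ => ((volume K.carrier).toReal)⁻¹) x = 1 := by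
  rw [setIntegral_eq_integral_of_forall_compl_eq_zero
      (fun x hx => Set.indicator_of_notMem (fun hxK => hx (h hxK)) _)]
  rw [integral_indicator_const _ (cube_measurableSet K), measureReal_def]
  simp only [smul_eq_mul]
  rw [mul_inv_cancel₀ (cube_volume_toReal_pos K).ne']

lemma integrable_indicator_cube (K : Cube d) (v : ℝ) :
    Integrable (K.carrier.indicator (fun _ => v)) := by
  rw [integrable_indicator_iff (cube_measurableSet K)]
  exact integrableOn_const (cube_volume_lt_top K).ne

lemma indicator_abs_le (K : Cube d) (v : ℝ) (hv : 0 ≤ v) (x : Rd d) :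
    |K.carrier.indicator (fun _ => v) x| ≤ v := by
  rcases em (x ∈ K.carrier) with hx | hx
  · rw [Set.indicator_of_mem hx, abs_of_nonneg hv]
  · rw [Set.indicator_of_notMem hx, abs_zero]; exact hv

lemma abs_int_le {α : Type*} [MeasurableSpace α] (μ : MeasureTheory.Measure α) (f : α → ℝ) :
    |∫ x, f x ∂μ| ≤ ∫ x, |f x| ∂μ := by
  simpa [Real.norm_eq_abs] using norm_integral_le_integral_norm (μ := μ) f

lemma finite_decomp (𝒜 : (Rd d → ℝ) → Prop) (f : Rd d → ℝ) (lam : ℕ → ℝ)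
    (A : ℕ → Rd d → ℝ) (n : ℕ)
    (hatom : ∀ j, 𝒜 (A j))
    (hlam : ∀ j, n ≤ j → lam j = 0)
    (hsum : ∀ x, ∑ j ∈ Finset.range n, lam j * A j x = f x) :
    IsDecomp 𝒜 f lam A ∧ ∑' j, |lam j| = ∑ j ∈ Finset.range n, |lam j| := by
  have hz : ∀ j ∉ Finset.range n, |lam j| = 0 := by
    intro j hj
    rw [hlam j (by simpa using hj), abs_zero]
  constructor
  · refine ⟨hatom, summable_of_ne_finset_zero hz, ?_⟩
    have hev : ∀ᶠ N in atTop, (0:ℝ) = ∫ x, |f x - ∑ j ∈ Finset.range N, lam j * A j x| := by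
      filter_upwards [eventually_ge_atTop n] with N hN
      have : ∀ x, ∑ j ∈ Finset.range N, lam j * A j x = f x := by
        intro x
        rw [← Finset.sum_subset (Finset.range_subset_range.2 hN)
          (fun j _ hj => by rw [hlam j (by simpa using hj), zero_mul])]
        exact hsum x
      have : (fun x => |f x - ∑ j ∈ Finset.range N, lam j * A j x|) = fun _ => (0:ℝ) := by
        funext x; rw [this x, sub_self, abs_zero]
      rw [this, integral_zero]
    exact Tendsto.congr' hev tendsto_const_nhds
  · exact tsum_eq_sum hz

lemma norm_le_of_decomp (𝒜 : (Rd d → ℝ) → Prop) (f : Rd d → ℝ) (lam : ℕ → ℝ)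
    (A : ℕ → Rd d → ℝ) (h : IsDecomp 𝒜 f lam A) : H1atNorm 𝒜 f ≤ ∑' j, |lam j| := by
  apply csInf_le
  · exact ⟨0, by rintro s ⟨lam', A', h', rfl⟩; exact tsum_nonneg fun j => abs_nonneg _⟩
  · exact ⟨lam, A, h, rfl⟩

end S4

set_option maxHeartbeats 1600000

/-- under the hypotheses of Theorem 2 there is `C > 0`, depending only on
`d, θ, δ, λ, C₀` and the constant `CG` in (G), such that every `(ω,𝒬)`-atom belongs to
`H¹_at(𝒜_𝒬)` with norm at most `C`. -/
theorem statement4 (d : ℕ) (hd : 3 ≤ d) (θ : ℝ) (hθ : 0 < θ)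
    (δ C₀ l CG : ℝ) (hδ : 0 < δ) (hC₀ : 0 < C₀) (hl : 0 < l) (hCG : 1 ≤ CG) :
    ∃ C > (0 : ℝ), ∀ 𝒬 : Set (Cube d), SatG θ CG 𝒬 →
      ∀ ω : Rd d → ℝ, Measurable ω → (∀ x, δ ≤ ω x ∧ ω x ≤ 1) →
      (∀ Q ∈ 𝒬, ∀ x ∈ Q.starSet θ 2, ∀ y ∈ Q.starSet θ 2,
        |ω x - ω y| ≤ C₀ * (‖x - y‖ / Q.diam) ^ l) →
      ∀ a : Rd d → ℝ, IsWAtom θ 𝒬 ω a →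
        MemH1at (IsWAtom θ 𝒬 (fun _ => 1)) a ∧
        H1atNorm (IsWAtom θ 𝒬 (fun _ => 1)) a ≤ C := by
  classical
  have h2l : (1:ℝ) < 2 ^ l := (Real.one_lt_rpow_iff_of_pos (by norm_num)).2 (Or.inl ⟨by norm_num, hl⟩)
  set B : ℝ := δ⁻¹ * C₀ * ((2 * (1+θ)^2) ^ l / (2 ^ l - 1)) with hBdef
  have hBpos : 0 < B := by
    rw [hBdef]
    have h1 : (0:ℝ) < (2*(1+θ)^2) ^ l := Real.rpow_pos_of_pos (by positivity) l
    have h2 : (0:ℝ) < 2 ^ l - 1 := by linarith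
    positivity
  have hnn : (0:ℝ) ≤ (1+θ)^(2*d) := by positivity
  have hcdB : (0:ℝ) < ((2:ℝ)^d+1) * B := mul_pos (by positivity) hBpos
  refine ⟨((2:ℝ)^d+1) * B + (1+θ)^(2*d) + 4, by linarith, ?_⟩
  intro 𝒬 hG ω hωm hωb hHol a ha
  obtain ⟨haInt, hcase⟩ := ha
  have key : ∃ (lam : ℕ → ℝ) (AA : ℕ → Rd d → ℝ) (n : ℕ),
      (∀ j, IsWAtom θ 𝒬 (fun _ => (1:ℝ)) (AA j)) ∧ (∀ j, n ≤ j → lam j = 0) ∧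
      (∀ x, ∑ j ∈ Finset.range n, lam j * AA j x = a x) ∧
      ∑ j ∈ Finset.range n, |lam j| ≤ ((2:ℝ)^d+1) * B + (1+θ)^(2*d) + 4 := by
    rcases hcase with ⟨Q, hQ, K, hKsub, hsupp, hbound, hcanc⟩ | ⟨Q, hQ, heq⟩
    ·
      have hr : 0 < K.radius := K.radius_pos
      have hrQ : 0 < Q.radius := Q.radius_pos
      have hA1 : (1:ℝ) ≤ (1+θ)^2 := by nlinarith
      set s : ℝ := (1+θ)^2 * Q.radius with hsdef
      have hs : 0 < s := by positivity
      have hKsub' : K.carrier ⊆ {y : Rd d | ∀ i, |Q.center i - y i| < s} := hKsub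
      have hbase : ∀ i, |Q.center i - K.center i| ≤ s - K.radius := S4.coord_bound hKsub'
      have hrs : K.radius ≤ s := by
        have h0 := hbase ⟨0, by omega⟩
        have := abs_nonneg (Q.center ⟨0, by omega⟩ - K.center ⟨0, by omega⟩)
        linarith
      obtain ⟨N, hNspec, hNmin⟩ : ∃ N : ℕ, (s ≤ 2^N * K.radius) ∧ ∀ k, k < N → 2^k * K.radius < s := by
        have hex : ∃ n : ℕ, s ≤ 2^n * K.radius := by
          obtain ⟨n, hn⟩ := pow_unbounded_of_one_lt (s / K.radius) (by norm_num : (1:ℝ) < 2)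
          refine ⟨n, ?_⟩
          rw [div_lt_iff₀ hr] at hn
          linarith
        refine ⟨Nat.find hex, Nat.find_spec hex, fun k hk => ?_⟩
        have := Nat.find_min hex hk
        push_neg at this
        exact this
      set rj : ℕ → ℝ := fun j => min (2^j * K.radius) s with hrjdef
      set cj : ℕ → Rd d :=
        fun j => K.center + ((rj j - K.radius)/(s - K.radius)) • (Q.center - K.center) with hcjdef
      have hrjpos : ∀ j, 0 < rj j := fun j => lt_min (by positivity) hs
      set KK : ℕ → Cube d := fun j => ⟨cj j, rj j, hrjpos j⟩ with hKKdef
      have hrj_low : ∀ j, K.radius ≤ rj j :=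
        fun j => le_min (le_mul_of_one_le_left hr.le (one_le_pow₀ (by norm_num))) hrs
      have hrj_hi : ∀ j, rj j ≤ s := fun j => min_le_right _ _
      have hrj0 : rj 0 = K.radius := by
        rw [hrjdef]; simp only [pow_zero, one_mul]; exact min_eq_left hrs
      have hrjN : rj N = s := min_eq_right hNspec
      have hrj_double : ∀ j, rj (j+1) ≤ 2 * rj j := by
        intro j
        rcases le_total ((2:ℝ)^j * K.radius) s with h | h
        · calc rj (j+1) ≤ 2^(j+1) * K.radius := min_le_left _ _
            _ = 2 * (2^j * K.radius) := by ring
            _ = 2 * rj j := by rw [hrjdef]; simp only []; rw [min_eq_left h]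
        · have h2 : rj j = s := by rw [hrjdef]; simp only []; exact min_eq_right h
          calc rj (j+1) ≤ s := min_le_right _ _
            _ ≤ 2 * s := by linarith
            _ = 2 * rj j := by rw [h2]
      have hcj_coord : ∀ j i, cj j i
          = K.center i + ((rj j - K.radius)/(s - K.radius)) * (Q.center i - K.center i) := by
        intro j i
        rw [hcjdef]
        simp [PiLp.add_apply, PiLp.smul_apply, PiLp.sub_apply, smul_eq_mul]
      have hcQ : ∀ j i, |Q.center i - cj j i| ≤ s - rj j := by
        intro j i
        have h2 : Q.center i - cj j i
            = (1 - (rj j - K.radius)/(s - K.radius)) * (Q.center i - K.center i) := by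
          rw [hcj_coord]; ring
        rcases eq_or_lt_of_le hrs with heq | hlt
        · have h1 : rj j = K.radius := le_antisymm (heq ▸ hrj_hi j) (hrj_low j)
          have h3 : Q.center i - K.center i = 0 := by
            have h4 := hbase i
            rw [← heq] at h4
            have := abs_nonneg (Q.center i - K.center i)
            have : |Q.center i - K.center i| = 0 := by linarith
            exact abs_eq_zero.1 this
          rw [h2, h3, mul_zero, abs_zero, h1, ← heq]
          linarith
        · set t : ℝ := (rj j - K.radius)/(s - K.radius) with htdef
          have hts : t * (s - K.radius) = rj j - K.radius := div_mul_cancel₀ _ (by linarith)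
          have ht1 : t ≤ 1 := (div_le_one (by linarith)).2 (by have := hrj_hi j; linarith)
          have ht0 : 0 ≤ t := div_nonneg (by have := hrj_low j; linarith) (by linarith)
          rw [h2, abs_mul, abs_of_nonneg (by linarith : (0:ℝ) ≤ 1 - t)]
          calc (1-t) * |Q.center i - K.center i| ≤ (1-t) * (s - K.radius) :=
                mul_le_mul_of_nonneg_left (hbase i) (by linarith)
            _ = (s - K.radius) - t * (s - K.radius) := by ring
            _ = s - rj j := by rw [hts]; ring
      have hstep : ∀ j i, |cj (j+1) i - cj j i| ≤ rj (j+1) - rj j := by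
        intro j i
        set t1 : ℝ := (rj j - K.radius)/(s - K.radius) with ht1def
        set t2 : ℝ := (rj (j+1) - K.radius)/(s - K.radius) with ht2def
        have h2 : cj (j+1) i - cj j i = (t2 - t1) * (Q.center i - K.center i) := by
          rw [hcj_coord, hcj_coord]; ring
        rcases eq_or_lt_of_le hrs with heq | hlt
        · have h1 : ∀ k, rj k = K.radius := fun k => le_antisymm (heq ▸ hrj_hi k) (hrj_low k)
          have h3 : Q.center i - K.center i = 0 := by
            have h4 := hbase i
            rw [← heq] at h4
            have h5 := abs_nonneg (Q.center i - K.center i)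
            exact abs_eq_zero.1 (by linarith)
          rw [h2, h3, mul_zero, abs_zero, h1 (j+1), h1 j]
          linarith
        · have hmono : rj j ≤ rj (j+1) := by
            refine min_le_min (mul_le_mul_of_nonneg_right ?_ hr.le) le_rfl
            exact pow_le_pow_right₀ (by norm_num) (Nat.le_succ j)
          have htt : 0 ≤ t2 - t1 := by
            rw [ht1def, ht2def, div_sub_div_same]
            exact div_nonneg (by linarith) (by linarith)
          have hts : (t2 - t1) * (s - K.radius) = rj (j+1) - rj j := by
            rw [ht1def, ht2def, div_sub_div_same, div_mul_cancel₀ _ (by linarith : s - K.radius ≠ 0)]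
            ring
          rw [h2, abs_mul, abs_of_nonneg htt]
          calc (t2 - t1) * |Q.center i - K.center i| ≤ (t2 - t1) * (s - K.radius) :=
                mul_le_mul_of_nonneg_left (hbase i) htt
            _ = rj (j+1) - rj j := hts
      have hmono : ∀ j, (KK j).carrier ⊆ (KK (j+1)).carrier :=
        fun j => S4.cube_subset (fun i => hstep j i)
      have hstar : ∀ j, (KK j).carrier ⊆ Q.starSet θ 2 :=
        fun j => S4.cube_subset (fun i => hcQ j i)
      have hQsub : Q.carrier ⊆ (KK N).carrier := by
        refine S4.cube_subset (fun i => ?_)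
        have h1 := hcQ N i
        rw [hrjN] at h1
        rw [abs_sub_comm]
        have : s - Q.radius ≥ 0 := by nlinarith
        calc |Q.center i - cj N i| ≤ 0 := by linarith
          _ ≤ rj N - Q.radius := by rw [hrjN]; linarith
      have hK0 : (KK 0).carrier = K.carrier := by
        have hcj0 : ∀ i, cj 0 i = K.center i := by
          intro i
          rw [hcj_coord, hrj0]
          simp
        ext y
        show (∀ i, |cj 0 i - y i| < rj 0) ↔ (∀ i, |K.center i - y i| < K.radius)
        rw [hrj0]
        exact forall_congr' fun i => by rw [hcj0 i]
      -- ============ part 2: integrals and m bounds ============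
      set vol : ℕ → ℝ := fun j => (volume (KK j).carrier).toReal with hvoldef
      have hvolpos : ∀ j, 0 < vol j := fun j => S4.cube_volume_toReal_pos _
      have hvolval : ∀ j, vol j = (2 * rj j)^d := fun j => S4.cube_volume_toReal (KK j)
      set g : ℕ → Rd d → ℝ := fun j => (KK j).carrier.indicator (fun _ => (vol j)⁻¹) with hgdef
      set q : Rd d → ℝ := Q.carrier.indicator (fun _ => ((volume Q.carrier).toReal)⁻¹) with hqdef
      set m : ℝ := ∫ x in K.carrier, a x with hmdef
      set b : Rd d → ℝ := fun x => (1+|m|)⁻¹ * (a x - m * g 0 x) with hbdef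
      have hgInt : ∀ j, Integrable (g j) := fun j => S4.integrable_indicator_cube _ _
      have hgabs : ∀ j x, |g j x| ≤ (vol j)⁻¹ :=
        fun j x => S4.indicator_abs_le _ _ (inv_nonneg.2 (hvolpos j).le) x
      have hgzero : ∀ j x, x ∉ (KK j).carrier → g j x = 0 :=
        fun j x hx => Set.indicator_of_notMem hx _
      have hgint1 : ∀ j, ∀ S : Set (Rd d), MeasurableSet S → (KK j).carrier ⊆ S →
          ∫ x in S, g j x = 1 := fun j S hS hsub => S4.integral_indicator_one hS hsub
      have hKmeas : MeasurableSet K.carrier := S4.cube_measurableSet K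
      have hvolK : 0 < (volume K.carrier).toReal := S4.cube_volume_toReal_pos K
      -- |a| integral bound
      have hIa : ∫ x in K.carrier, |a x| ≤ 1 := by
        have h1 : ∫ x in K.carrier, |a x| ≤ ∫ x in K.carrier, ((volume K.carrier).toReal)⁻¹ :=
          integral_mono_ae (haInt.abs.integrableOn)
            (integrableOn_const (S4.cube_volume_lt_top K).ne)
            (ae_restrict_of_ae hbound)
        rw [setIntegral_const, measureReal_def, smul_eq_mul, mul_inv_cancel₀ hvolK.ne'] at h1
        exact h1
      have hm1 : |m| ≤ 1 := by
        rw [hmdef]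
        exact le_trans (S4.abs_int_le _ _) hIa
      -- Holder bound on ω over K
      have hdiampos : 0 < Q.diam := by
        have : (0:ℝ) < Real.sqrt d := Real.sqrt_pos.2 (by positivity)
        unfold Cube.diam; positivity
      have hωK : ∀ x ∈ K.carrier, |ω K.center - ω x| ≤ C₀ * (K.radius / Q.radius) ^ l := by
        intro x hx
        refine le_trans (hHol Q hQ K.center (hKsub (S4.cube_mem_center K)) x (hKsub hx)) ?_
        refine mul_le_mul_of_nonneg_left ?_ hC₀.le
        have hn : ‖K.center - x‖ ≤ Real.sqrt d * (2 * K.radius) :=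
          S4.norm_sub_le_of_mem (S4.cube_mem_center K) hx
        refine Real.rpow_le_rpow (div_nonneg (norm_nonneg _) hdiampos.le) ?_ hl.le
        rw [div_le_div_iff₀ hdiampos hrQ]
        have hsq : (0:ℝ) < Real.sqrt d := Real.sqrt_pos.2 (by positivity)
        calc ‖K.center - x‖ * Q.radius ≤ (Real.sqrt d * (2 * K.radius)) * Q.radius :=
              mul_le_mul_of_nonneg_right hn hrQ.le
          _ = K.radius * (2 * Real.sqrt d * Q.radius) := by ring
          _ = K.radius * Q.diam := by rw [Cube.diam]
      -- the small-m bound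
      have hmsmall : |m| ≤ δ⁻¹ * (C₀ * (K.radius / Q.radius) ^ l) := by
        have hωmm : AEStronglyMeasurable (fun x => ω K.center - ω x)
            (volume.restrict K.carrier) :=
          (measurable_const.sub hωm).aestronglyMeasurable
        have hωbd : ∃ Cb, ∀ x, ‖ω K.center - ω x‖ ≤ Cb := by
          refine ⟨2, fun x => ?_⟩
          have h1 := hωb K.center; have h2 := hωb x
          rw [Real.norm_eq_abs, abs_sub_le_iff]
          constructor <;> nlinarith
        have hint1 : Integrable (fun x => (ω K.center - ω x) * a x) (volume.restrict K.carrier) :=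
          Integrable.bdd_mul haInt.integrableOn hωmm (Filter.Eventually.of_forall hωbd.choose_spec)
        have hint2 : Integrable (fun x => a x * (ω K.center - ω x)) (volume.restrict K.carrier) := by
          simpa [mul_comm] using hint1
        have hint3 : Integrable (fun x => a x * ω x) (volume.restrict K.carrier) := by
          have : Integrable (fun x => ω x * a x) (volume.restrict K.carrier) :=
            Integrable.bdd_mul haInt.integrableOn hωm.aestronglyMeasurable
              (Filter.Eventually.of_forall (fun x => show ‖ω x‖ ≤ 1 by
                have h1 := hωb x; rw [Real.norm_eq_abs, abs_le]; constructor <;> linarith))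
          simpa [mul_comm] using this
        have hkey : ∫ x in K.carrier, a x * (ω K.center - ω x) = ω K.center * m := by
          have hsub : (fun x => a x * (ω K.center - ω x))
              = fun x => a x * ω K.center - a x * ω x := by funext x; ring
          rw [hsub, integral_sub (haInt.integrableOn.mul_const _) hint3,
            hcanc, sub_zero, integral_mul_const, hmdef, mul_comm]
        have habs : |∫ x in K.carrier, a x * (ω K.center - ω x)|
            ≤ C₀ * (K.radius / Q.radius) ^ l := by
          refine le_trans (S4.abs_int_le _ _) ?_
          have hle : ∀ᵐ x ∂(volume.restrict K.carrier),
              |a x * (ω K.center - ω x)| ≤ |a x| * (C₀ * (K.radius / Q.radius) ^ l) := by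
            filter_upwards [ae_restrict_mem hKmeas] with x hx
            rw [abs_mul]
            exact mul_le_mul_of_nonneg_left (hωK x hx) (abs_nonneg _)
          calc ∫ x in K.carrier, |a x * (ω K.center - ω x)|
              ≤ ∫ x in K.carrier, |a x| * (C₀ * (K.radius / Q.radius) ^ l) :=
                integral_mono_ae hint2.abs ((haInt.abs.integrableOn).mul_const _) hle
            _ = (∫ x in K.carrier, |a x|) * (C₀ * (K.radius / Q.radius) ^ l) :=
                integral_mul_const _ _
            _ ≤ 1 * (C₀ * (K.radius / Q.radius) ^ l) := by
                refine mul_le_mul_of_nonneg_right hIa ?_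
                positivity
            _ = C₀ * (K.radius / Q.radius) ^ l := one_mul _
        have hωc : δ ≤ ω K.center := (hωb K.center).1
        have h5 : δ * |m| ≤ C₀ * (K.radius / Q.radius) ^ l := by
          calc δ * |m| ≤ ω K.center * |m| := mul_le_mul_of_nonneg_right hωc (abs_nonneg _)
            _ = |ω K.center * m| := by
                rw [abs_mul, abs_of_nonneg (by linarith : 0 ≤ ω K.center)]
            _ = |∫ x in K.carrier, a x * (ω K.center - ω x)| := by rw [hkey]
            _ ≤ C₀ * (K.radius / Q.radius) ^ l := habs
        rw [le_inv_mul_iff₀ hδ]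
        linarith
      have hBpos : 0 < B := by
        rw [hBdef]
        have : (0:ℝ) < (2*(1+θ)^2) ^ l := Real.rpow_pos_of_pos (by positivity) l
        have h2 : (0:ℝ) < 2 ^ l - 1 := by linarith
        positivity
      have hvolKK : ∀ j, (volume (KK j).carrier).toReal = vol j := fun j => by rw [hvoldef]
      have hvol0K : vol 0 = (volume K.carrier).toReal := by rw [hvoldef]; simp only []; rw [hK0]
      have hg0K : ∀ x, g 0 x = K.carrier.indicator (fun _ => ((volume K.carrier).toReal)⁻¹) x := by
        intro x
        rw [hgdef]; simp only []; rw [hK0, hvol0K]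
      have hP : (0:ℝ) < 1 + |m| := by positivity
      have hcd : (0:ℝ) < (2:ℝ)^d + 1 := by positivity
      have hcf : (0:ℝ) < (1+θ)^(2*d) + 1 := by positivity
      -- ====== atom b ======
      have hbAtom : IsWAtom θ 𝒬 (fun _ => (1:ℝ)) b := by
        constructor
        · rw [hbdef]
          exact (haInt.sub ((hgInt 0).const_mul m)).const_mul _
        refine Or.inl ⟨Q, hQ, K, hKsub, ?_, ?_, ?_⟩
        · intro x hx
          by_contra hxK
          have hax : a x = 0 := by
            by_contra h; exact hxK (hsupp h)
          have hgx : g 0 x = 0 := hgzero 0 x (by rw [hK0]; exact hxK)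
          exact hx (by show (1+|m|)⁻¹ * (a x - m * g 0 x) = 0; rw [hax, hgx]; ring)
        · filter_upwards [hbound] with x hx
          have h1 : |g 0 x| ≤ ((volume K.carrier).toReal)⁻¹ := by
            have := hgabs 0 x
            rwa [hvol0K] at this
          show |(1+|m|)⁻¹ * (a x - m * g 0 x)| ≤ _
          rw [abs_mul, abs_of_nonneg (inv_nonneg.2 hP.le)]
          have h2 : |a x - m * g 0 x| ≤ (1+|m|) * ((volume K.carrier).toReal)⁻¹ := by
            calc |a x - m * g 0 x| ≤ |a x| + |m * g 0 x| := abs_sub _ _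
              _ = |a x| + |m| * |g 0 x| := by rw [abs_mul]
              _ ≤ ((volume K.carrier).toReal)⁻¹ + |m| * ((volume K.carrier).toReal)⁻¹ := by
                  refine add_le_add hx (mul_le_mul_of_nonneg_left h1 (abs_nonneg _))
              _ = (1+|m|) * ((volume K.carrier).toReal)⁻¹ := by ring
          calc (1+|m|)⁻¹ * |a x - m * g 0 x|
              ≤ (1+|m|)⁻¹ * ((1+|m|) * ((volume K.carrier).toReal)⁻¹) :=
                mul_le_mul_of_nonneg_left h2 (inv_nonneg.2 hP.le)
            _ = ((volume K.carrier).toReal)⁻¹ := by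
                rw [← mul_assoc, inv_mul_cancel₀ hP.ne', one_mul]
        · have hint0 : ∫ x in K.carrier, g 0 x = 1 :=
            hgint1 0 K.carrier hKmeas (le_of_eq hK0)
          calc ∫ x in K.carrier, b x * (fun _ => (1:ℝ)) x
              = ∫ x in K.carrier, (1+|m|)⁻¹ * (a x - m * g 0 x) := by
                refine setIntegral_congr_fun hKmeas (fun x _ => ?_)
                show b x * 1 = _
                rw [mul_one]
            _ = (1+|m|)⁻¹ * ∫ x in K.carrier, (a x - m * g 0 x) := integral_const_mul _ _
            _ = (1+|m|)⁻¹ * ((∫ x in K.carrier, a x) - ∫ x in K.carrier, m * g 0 x) := by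
                rw [integral_sub haInt.integrableOn (((hgInt 0).const_mul m).integrableOn)]
            _ = (1+|m|)⁻¹ * (m - m * 1) := by
                rw [← hmdef, integral_const_mul, hint0]
            _ = 0 := by ring
      -- ====== telescoping atoms ======
      have hvol_inv : ∀ j, (vol j)⁻¹ ≤ (2:ℝ)^d * (vol (j+1))⁻¹ := by
        intro j
        have hv : vol (j+1) ≤ 2^d * vol j := by
          rw [hvolval, hvolval]
          calc (2 * rj (j+1))^d ≤ (2 * (2 * rj j))^d := by
                refine pow_le_pow_left₀ (by have := hrjpos (j+1); positivity) ?_ d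
                have := hrj_double j; linarith
            _ = 2^d * (2 * rj j)^d := by rw [← mul_pow 2 (2 * rj j) d]
        calc (vol j)⁻¹ = vol (j+1) * (vol (j+1))⁻¹ * (vol j)⁻¹ := by
              rw [mul_inv_cancel₀ (hvolpos (j+1)).ne', one_mul]
          _ ≤ (2^d * vol j) * (vol (j+1))⁻¹ * (vol j)⁻¹ := by
              refine mul_le_mul_of_nonneg_right (mul_le_mul_of_nonneg_right hv ?_) ?_ <;>
                exact inv_nonneg.2 (hvolpos _).le
          _ = (2:ℝ)^d * (vol (j+1))⁻¹ * (vol j * (vol j)⁻¹) := by ring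
          _ = (2:ℝ)^d * (vol (j+1))⁻¹ := by rw [mul_inv_cancel₀ (hvolpos j).ne', mul_one]
      have hdiffAtom : ∀ j, IsWAtom θ 𝒬 (fun _ => (1:ℝ))
          (fun x => ((2:ℝ)^d+1)⁻¹ * (g j x - g (j+1) x)) := by
        intro j
        constructor
        · exact ((hgInt j).sub (hgInt (j+1))).const_mul _
        refine Or.inl ⟨Q, hQ, KK (j+1), hstar (j+1), ?_, ?_, ?_⟩
        · intro x hx
          by_contra hxK
          refine hx ?_
          have h1 : g (j+1) x = 0 := hgzero (j+1) x hxK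
          have h2 : g j x = 0 := hgzero j x (fun hmem => hxK (hmono j hmem))
          show ((2:ℝ)^d+1)⁻¹ * (g j x - g (j+1) x) = 0
          rw [h1, h2]; ring
        · refine Filter.Eventually.of_forall (fun x => ?_)
          rw [hvolKK]
          rw [abs_mul, abs_of_nonneg (inv_nonneg.2 hcd.le)]
          have h2 : |g j x - g (j+1) x| ≤ ((2:ℝ)^d+1) * (vol (j+1))⁻¹ := by
            calc |g j x - g (j+1) x| ≤ |g j x| + |g (j+1) x| := abs_sub _ _
              _ ≤ (vol j)⁻¹ + (vol (j+1))⁻¹ := add_le_add (hgabs j x) (hgabs (j+1) x)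
              _ ≤ (2:ℝ)^d * (vol (j+1))⁻¹ + (vol (j+1))⁻¹ := by
                  have := hvol_inv j; linarith
              _ = ((2:ℝ)^d+1) * (vol (j+1))⁻¹ := by ring
          calc ((2:ℝ)^d+1)⁻¹ * |g j x - g (j+1) x|
              ≤ ((2:ℝ)^d+1)⁻¹ * (((2:ℝ)^d+1) * (vol (j+1))⁻¹) :=
                mul_le_mul_of_nonneg_left h2 (inv_nonneg.2 hcd.le)
            _ = (vol (j+1))⁻¹ := by rw [← mul_assoc, inv_mul_cancel₀ hcd.ne', one_mul]
        · have e1 : ∫ x in (KK (j+1)).carrier, g j x = 1 :=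
            hgint1 j _ (S4.cube_measurableSet _) (hmono j)
          have e2 : ∫ x in (KK (j+1)).carrier, g (j+1) x = 1 :=
            hgint1 (j+1) _ (S4.cube_measurableSet _) subset_rfl
          calc ∫ x in (KK (j+1)).carrier, (((2:ℝ)^d+1)⁻¹ * (g j x - g (j+1) x)) * (fun _ => (1:ℝ)) x
              = ∫ x in (KK (j+1)).carrier, ((2:ℝ)^d+1)⁻¹ * (g j x - g (j+1) x) := by
                refine setIntegral_congr_fun (S4.cube_measurableSet _) (fun x _ => ?_)
                show _ * 1 = _; rw [mul_one]
            _ = ((2:ℝ)^d+1)⁻¹ * ∫ x in (KK (j+1)).carrier, (g j x - g (j+1) x) :=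
                integral_const_mul _ _
            _ = ((2:ℝ)^d+1)⁻¹ * ((∫ x in (KK (j+1)).carrier, g j x)
                  - ∫ x in (KK (j+1)).carrier, g (j+1) x) := by
                rw [integral_sub ((hgInt j).integrableOn) ((hgInt (j+1)).integrableOn)]
            _ = 0 := by rw [e1, e2]; ring
      -- ====== final atom ======
      have hqv : ((volume Q.carrier).toReal)⁻¹ = (1+θ)^(2*d) * (vol N)⁻¹ := by
        rw [S4.cube_volume_toReal Q, hvolval N, hrjN, hsdef]
        have h1 : (2*((1+θ)^2*Q.radius))^d = (1+θ)^(2*d) * (2*Q.radius)^d := by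
          rw [pow_mul, ← mul_pow]
          congr 1
          ring
        rw [h1, mul_inv, ← mul_assoc,
          mul_inv_cancel₀ (pow_ne_zero (2*d) (by positivity : (1+θ) ≠ 0)), one_mul]
      have hqabs : ∀ x, |q x| ≤ ((volume Q.carrier).toReal)⁻¹ := by
        intro x
        rw [hqdef]
        exact S4.indicator_abs_le _ _ (inv_nonneg.2 (S4.cube_volume_toReal_pos Q).le) x
      have hqzero : ∀ x, x ∉ Q.carrier → q x = 0 := by
        intro x hx; rw [hqdef]; exact Set.indicator_of_notMem hx _
      have hqint1 : ∫ x in (KK N).carrier, q x = 1 := by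
        rw [hqdef]
        exact S4.integral_indicator_one (S4.cube_measurableSet _) hQsub
      have hfinAtom : IsWAtom θ 𝒬 (fun _ => (1:ℝ))
          (fun x => ((1+θ)^(2*d)+1)⁻¹ * (g N x - q x)) := by
        constructor
        · refine ((hgInt N).sub ?_).const_mul _
          rw [hqdef]; exact S4.integrable_indicator_cube _ _
        refine Or.inl ⟨Q, hQ, KK N, hstar N, ?_, ?_, ?_⟩
        · intro x hx
          by_contra hxK
          refine hx ?_
          have h1 : g N x = 0 := hgzero N x hxK
          have h2 : q x = 0 := hqzero x (fun hmem => hxK (hQsub hmem))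
          show ((1+θ)^(2*d)+1)⁻¹ * (g N x - q x) = 0
          rw [h1, h2]; ring
        · refine Filter.Eventually.of_forall (fun x => ?_)
          rw [hvolKK]
          rw [abs_mul, abs_of_nonneg (inv_nonneg.2 hcf.le)]
          have h2 : |g N x - q x| ≤ ((1+θ)^(2*d)+1) * (vol N)⁻¹ := by
            calc |g N x - q x| ≤ |g N x| + |q x| := abs_sub _ _
              _ ≤ (vol N)⁻¹ + (1+θ)^(2*d) * (vol N)⁻¹ := by
                  refine add_le_add (hgabs N x) ?_
                  rw [← hqv]; exact hqabs x
              _ = ((1+θ)^(2*d)+1) * (vol N)⁻¹ := by ring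
          calc ((1+θ)^(2*d)+1)⁻¹ * |g N x - q x|
              ≤ ((1+θ)^(2*d)+1)⁻¹ * (((1+θ)^(2*d)+1) * (vol N)⁻¹) :=
                mul_le_mul_of_nonneg_left h2 (inv_nonneg.2 hcf.le)
            _ = (vol N)⁻¹ := by rw [← mul_assoc, inv_mul_cancel₀ hcf.ne', one_mul]
        · have e1 : ∫ x in (KK N).carrier, g N x = 1 :=
            hgint1 N _ (S4.cube_measurableSet _) subset_rfl
          calc ∫ x in (KK N).carrier, (((1+θ)^(2*d)+1)⁻¹ * (g N x - q x)) * (fun _ => (1:ℝ)) x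
              = ∫ x in (KK N).carrier, ((1+θ)^(2*d)+1)⁻¹ * (g N x - q x) := by
                refine setIntegral_congr_fun (S4.cube_measurableSet _) (fun x _ => ?_)
                show _ * 1 = _; rw [mul_one]
            _ = ((1+θ)^(2*d)+1)⁻¹ * ∫ x in (KK N).carrier, (g N x - q x) := integral_const_mul _ _
            _ = ((1+θ)^(2*d)+1)⁻¹ * ((∫ x in (KK N).carrier, g N x)
                  - ∫ x in (KK N).carrier, q x) := by
                rw [integral_sub ((hgInt N).integrableOn)]
                rw [hqdef]
                exact (S4.integrable_indicator_cube _ _).integrableOn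
            _ = 0 := by rw [e1, hqint1]; ring
      have hqAtom : IsWAtom θ 𝒬 (fun _ => (1:ℝ)) q := by
        constructor
        · rw [hqdef]; exact S4.integrable_indicator_cube _ _
        · exact Or.inr ⟨Q, hQ, hqdef⟩
      -- ====== the N * |m| bound ======
      have hNm : (N:ℝ) * |m| ≤ B := by
        rcases Nat.eq_zero_or_pos N with h0 | hposN
        · rw [h0]; push_cast; rw [zero_mul]; exact hBpos.le
        obtain ⟨M, rfl⟩ : ∃ M, N = M+1 := ⟨N-1, by omega⟩
        have hlt : 2^M * K.radius < s := hNmin M (by omega)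
        set u : ℝ := K.radius / Q.radius with hudef
        have hu0 : 0 < u := div_pos hr hrQ
        have huA : u ≤ (2*(1+θ)^2) / 2^(M+1) := by
          rw [hudef, div_le_div_iff₀ hrQ (by positivity : (0:ℝ) < 2^(M+1))]
          have h2 : (2:ℝ)^(M+1) = 2 * 2^M := by ring
          rw [h2, hsdef] at *
          nlinarith [hlt, hrQ]
        have hul : u ^ l ≤ (2*(1+θ)^2) ^ l / ((2:ℝ)^l)^(M+1) := by
          have h2 : ((2:ℝ)^(M+1)) ^ l = ((2:ℝ)^l)^(M+1) := by
            rw [← Real.rpow_natCast (2:ℝ) (M+1), ← Real.rpow_natCast ((2:ℝ)^l) (M+1),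
              ← Real.rpow_mul (by norm_num), ← Real.rpow_mul (by norm_num), mul_comm]
          rw [← h2, ← Real.div_rpow (by positivity) (by positivity)]
          exact Real.rpow_le_rpow hu0.le huA hl.le
        have hE : (0:ℝ) < 2^l - 1 := by linarith
        have hPp : (0:ℝ) < ((2:ℝ)^l)^(M+1) := by
          have : (0:ℝ) < (2:ℝ)^l := by linarith
          positivity
        have hGp : (0:ℝ) < (2*(1+θ)^2) ^ l := Real.rpow_pos_of_pos (by positivity) l
        have hbern : ((M+1:ℕ):ℝ) * (2^l - 1) ≤ ((2:ℝ)^l)^(M+1) := by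
          have h1 := one_add_mul_le_pow (a := (2:ℝ)^l - 1) (by linarith) (M+1)
          have h2 : (1 + ((2:ℝ)^l - 1)) = 2^l := by ring
          rw [h2] at h1
          push_cast at h1 ⊢
          linarith
        have hNP : ((M+1:ℕ):ℝ) ≤ ((2:ℝ)^l)^(M+1) / (2^l - 1) := (le_div_iff₀ hE).2 hbern
        have hNu : ((M+1:ℕ):ℝ) * u^l ≤ (2*(1+θ)^2) ^ l / (2^l - 1) := by
          calc ((M+1:ℕ):ℝ) * u^l
              ≤ (((2:ℝ)^l)^(M+1) / (2^l - 1)) * ((2*(1+θ)^2) ^ l / ((2:ℝ)^l)^(M+1)) := by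
                refine mul_le_mul hNP hul (Real.rpow_nonneg hu0.le l) (by positivity)
            _ = (2*(1+θ)^2) ^ l / (2^l - 1) := by
                field_simp
        calc ((M+1:ℕ):ℝ) * |m| ≤ ((M+1:ℕ):ℝ) * (δ⁻¹ * (C₀ * u^l)) := by
              exact mul_le_mul_of_nonneg_left hmsmall (Nat.cast_nonneg _)
          _ = δ⁻¹ * C₀ * (((M+1:ℕ):ℝ) * u^l) := by ring
          _ ≤ δ⁻¹ * C₀ * ((2*(1+θ)^2) ^ l / (2^l - 1)) := by
              refine mul_le_mul_of_nonneg_left hNu (by positivity)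
          _ = B := by rw [hBdef]
      -- ====== assembly ======
      set lam : ℕ → ℝ := (fun j => if j = 0 then 1 + |m| else if j ≤ N then m * ((2:ℝ)^d+1)
          else if j = N+1 then m * ((1+θ)^(2*d)+1) else if j = N+2 then m else 0) with hlamdef
      set AA : ℕ → Rd d → ℝ := (fun j => if j = 0 then b else if j ≤ N then
            (fun x => ((2:ℝ)^d+1)⁻¹ * (g (j-1) x - g j x))
          else if j = N+1 then (fun x => ((1+θ)^(2*d)+1)⁻¹ * (g N x - q x)) else q) with hAAdef
      have hL0 : lam 0 = 1 + |m| := by simp [hlamdef]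
      have hA0 : AA 0 = b := by simp [hAAdef]
      have hLk : ∀ k, k < N → lam (k+1) = m * ((2:ℝ)^d+1) := by
        intro k hk
        simp [hlamdef, show k+1 ≤ N from by omega]
      have hAk : ∀ k, k < N → AA (k+1) = fun x => ((2:ℝ)^d+1)⁻¹ * (g k x - g (k+1) x) := by
        intro k hk
        simp [hAAdef, show k+1 ≤ N from by omega]
      have hLN1 : lam (N+1) = m * ((1+θ)^(2*d)+1) := by
        simp [hlamdef, show ¬(N+1 ≤ N) from by omega]
      have hAN1 : AA (N+1) = fun x => ((1+θ)^(2*d)+1)⁻¹ * (g N x - q x) := by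
        simp [hAAdef, show ¬(N+1 ≤ N) from by omega]
      have hLN2 : lam (N+2) = m := by
        simp [hlamdef, show ¬(N+2 ≤ N) from by omega, show ¬(N+2 = N+1) from by omega]
      have hAN2 : AA (N+2) = q := by
        simp [hAAdef, show ¬(N+2 ≤ N) from by omega, show ¬(N+2 = N+1) from by omega]
      have hb_eval : ∀ x, (1+|m|) * b x = a x - m * g 0 x := by
        intro x
        show (1+|m|) * ((1+|m|)⁻¹ * (a x - m * g 0 x)) = _
        rw [← mul_assoc, mul_inv_cancel₀ hP.ne', one_mul]
      refine ⟨lam, AA, N+3, ?_, ?_, ?_, ?_⟩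
      · intro j
        rcases Nat.eq_zero_or_pos j with rfl | hj0
        · rw [hA0]; exact hbAtom
        rcases le_or_gt j N with hjN | hjN
        · obtain ⟨k, rfl⟩ : ∃ k, j = k + 1 := ⟨j - 1, by omega⟩
          rw [hAk k (by omega)]
          exact hdiffAtom k
        rcases eq_or_ne j (N+1) with rfl | hj1
        · rw [hAN1]; exact hfinAtom
        rcases eq_or_ne j (N+2) with rfl | hj2
        · rw [hAN2]; exact hqAtom
        · have : AA j = q := by
            simp [hAAdef, show ¬(j = 0) from by omega, show ¬(j ≤ N) from by omega, hj1, hj2]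
          rw [this]; exact hqAtom
      · intro j hj
        simp [hlamdef, show ¬(j = 0) from by omega, show ¬(j ≤ N) from by omega,
          show ¬(j = N+1) from by omega, show ¬(j = N+2) from by omega]
      · intro x
        rw [show N+3 = (N+2)+1 from by omega, Finset.sum_range_succ,
          show N+2 = (N+1)+1 from by omega, Finset.sum_range_succ, Finset.sum_range_succ']
        have htel : ∑ k ∈ Finset.range N, lam (k+1) * AA (k+1) x = m * (g 0 x - g N x) := by
          have hterm : ∀ k, k < N → lam (k+1) * AA (k+1) x = m * (g k x - g (k+1) x) := by
            intro k hk
            rw [hLk k hk, hAk k hk]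
            show (m * ((2:ℝ)^d+1)) * (((2:ℝ)^d+1)⁻¹ * (g k x - g (k+1) x)) = _
            rw [show (m * ((2:ℝ)^d+1)) * (((2:ℝ)^d+1)⁻¹ * (g k x - g (k+1) x))
              = m * (((2:ℝ)^d+1) * ((2:ℝ)^d+1)⁻¹) * (g k x - g (k+1) x) from by ring,
              mul_inv_cancel₀ hcd.ne', mul_one]
          rw [Finset.sum_congr rfl (fun k hk => hterm k (Finset.mem_range.1 hk)),
            ← Finset.mul_sum, Finset.sum_range_sub' (fun k => g k x)]
        rw [htel, hL0, hA0, hb_eval x, hLN1, hAN1, hLN2, hAN2]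
        show m * (g 0 x - g N x) + (a x - m * g 0 x)
            + (m * ((1+θ)^(2*d)+1)) * (((1+θ)^(2*d)+1)⁻¹ * (g N x - q x)) + m * q x = a x
        rw [show (m * ((1+θ)^(2*d)+1)) * (((1+θ)^(2*d)+1)⁻¹ * (g N x - q x))
          = m * (((1+θ)^(2*d)+1) * ((1+θ)^(2*d)+1)⁻¹) * (g N x - q x) from by ring,
          mul_inv_cancel₀ hcf.ne', mul_one]
        ring
      · rw [show N+3 = (N+2)+1 from by omega, Finset.sum_range_succ,
          show N+2 = (N+1)+1 from by omega, Finset.sum_range_succ, Finset.sum_range_succ']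
        have habs : ∀ k, k < N → |lam (k+1)| = |m| * ((2:ℝ)^d+1) := by
          intro k hk
          rw [hLk k hk, abs_mul, abs_of_pos hcd]
        rw [Finset.sum_congr rfl (fun k hk => habs k (Finset.mem_range.1 hk)),
          Finset.sum_const, Finset.card_range, nsmul_eq_mul, hL0, hLN1, hLN2,
          abs_of_pos hP, abs_mul, abs_of_pos hcf]
        have t1 : (N:ℝ) * (|m| * ((2:ℝ)^d+1)) ≤ B * ((2:ℝ)^d+1) := by
          rw [← mul_assoc]
          exact mul_le_mul_of_nonneg_right hNm hcd.le
        have t2 : |m| * ((1+θ)^(2*d)+1) ≤ (1+θ)^(2*d)+1 := by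
          nlinarith [hm1, hcf]
        nlinarith [t1, t2, hm1]

    · refine ⟨fun j => if j = 0 then 1 else 0, fun _ => a, 1, ?_, ?_, ?_, ?_⟩
      · intro j; exact ⟨haInt, Or.inr ⟨Q, hQ, heq⟩⟩
      · intro j hj; simp [show ¬(j = 0) from by omega]
      · intro x; simp
      · have he : ∑ j ∈ Finset.range 1, |if j = 0 then (1:ℝ) else 0| = 1 := by simp
        rw [he]; linarith
  obtain ⟨lam, AA, n, h1, h2, h3, h4⟩ := key
  obtain ⟨hd1, hd2⟩ := S4.finite_decomp _ a lam AA n h1 h2 h3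
  refine ⟨⟨lam, AA, hd1⟩, ?_⟩
  calc H1atNorm (IsWAtom θ 𝒬 fun _ => 1) a ≤ ∑' j, |lam j| :=
        S4.norm_le_of_decomp _ _ _ _ hd1
    _ = ∑ j ∈ Finset.range n, |lam j| := hd2
    _ ≤ _ := h4
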